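/- Let Θ : ℝ^{2N} → ℝ^N be the C¹ map assigning to (x,p) the unique solution θ of p_i = θ_i + Σ_{j≠i} ψ_x(x_i−x_j, θ_i−θ_j). Then the components of Θ Poisson-commute: for all i, j ∈ {1,…,N} and all (x,p) ∈ ℝ^{2N}, Σ_{k=1}^N ( ∂Θ_i/∂x_k · ∂Θ_j/∂p_k − ∂Θ_i/∂p_k · ∂Θ_j/∂x_k ) = 0. Consequently, for every a, b ∈ ℕ the conserved quantities Q_a(x,p) = Σ_{i=1}^N Θ_i(x,p)^a satisfy {Q_a, Q_b} = 0, where {·,·} is the canonical Poisson bracket. -/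

import Mathlib

open Finset

private lemma aux_matrix (N : ℕ) (Dp Dx a c : Fin N → Fin N → ℝ)
    (hasym : ∀ i j, a i j = a j i)
    (hP : ∀ i k, (if i = k then (1:ℝ) else 0)
      = Dp i k + ∑ j ∈ univ.erase i, c i j * (Dp i k - Dp j k))
    (hX : ∀ i k, (0:ℝ) = Dx i k + ∑ j ∈ univ.erase i,
      (a i j * ((if i = k then (1:ℝ) else 0) - (if j = k then (1:ℝ) else 0))
        + c i j * (Dx i k - Dx j k))) :
    ∀ i j, ∑ k, (Dx i k * Dp j k - Dp i k * Dx j k) = 0 := by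
  classical
  set M : Matrix (Fin N) (Fin N) ℝ :=
    Matrix.of fun i l => if l = i then 1 + ∑ j ∈ univ.erase i, c i j else -(c i l) with hM
  set B : Matrix (Fin N) (Fin N) ℝ :=
    Matrix.of fun i l => if l = i then ∑ j ∈ univ.erase i, a i j else -(a i l) with hB
  set DP : Matrix (Fin N) (Fin N) ℝ := Matrix.of Dp with hDP
  set DX : Matrix (Fin N) (Fin N) ℝ := Matrix.of Dx with hDX
  have hMrow : ∀ i k (D : Fin N → Fin N → ℝ), ∑ l, M i l * D l k
      = D i k + ((∑ j ∈ univ.erase i, c i j) * D i k - ∑ l ∈ univ.erase i, c i l * D l k) := by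
    intro i k D
    rw [← Finset.add_sum_erase _ _ (mem_univ i)]
    have h1 : ∑ l ∈ univ.erase i, M i l * D l k = ∑ l ∈ univ.erase i, -(c i l * D l k) :=
      Finset.sum_congr rfl fun l hl => by
        simp [hM, Matrix.of_apply, if_neg (Finset.ne_of_mem_erase hl)]
    rw [h1]
    simp only [hM, Matrix.of_apply, if_true, eq_self_iff_true, Finset.sum_neg_distrib]
    ring
  have hMDp : M * DP = 1 := by
    ext i k
    rw [Matrix.mul_apply, Matrix.one_apply]
    simp only [hDP, Matrix.of_apply]
    rw [hMrow i k Dp, hP i k]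
    simp only [mul_sub, Finset.sum_sub_distrib, ← Finset.sum_mul]
  have hBsum : ∀ i k, ∑ j ∈ univ.erase i,
      a i j * ((if i = k then (1:ℝ) else 0) - (if j = k then (1:ℝ) else 0)) = B i k := by
    intro i k
    by_cases hik : i = k
    · subst hik
      rw [hB]
      simp only [Matrix.of_apply, if_true, eq_self_iff_true]
      refine Finset.sum_congr rfl fun j hj => ?_
      rw [if_neg (Finset.ne_of_mem_erase hj)]
      simp
    · rw [hB]
      simp only [Matrix.of_apply, if_neg (Ne.symm hik)]
      rw [Finset.sum_eq_single k]
      · rw [if_neg hik, if_pos rfl]; ring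
      · intro j hj hjk
        rw [if_neg hik, if_neg hjk]; ring
      · intro hk
        exact absurd (Finset.mem_erase.mpr ⟨Ne.symm hik, mem_univ k⟩) hk
  have hMDx : M * DX = -B := by
    ext i k
    rw [Matrix.mul_apply, Matrix.neg_apply]
    simp only [hDX, Matrix.of_apply]
    rw [hMrow i k Dx]
    have h2 := hX i k
    rw [Finset.sum_add_distrib, hBsum i k] at h2
    simp only [mul_sub, Finset.sum_sub_distrib, ← Finset.sum_mul] at *
    linarith
  have hBsymT : B.transpose = B := by
    ext i k
    rw [Matrix.transpose_apply, hB]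
    by_cases hik : i = k
    · subst hik; rfl
    · simp only [Matrix.of_apply, if_neg (Ne.symm hik), if_neg hik, hasym]
  have hDpM : DP * M = 1 := mul_eq_one_comm.mp hMDp
  have hDXeq : DX = -(DP * B) := by
    calc DX = (DP * M) * DX := by rw [hDpM, Matrix.one_mul]
    _ = DP * (M * DX) := Matrix.mul_assoc _ _ _
    _ = -(DP * B) := by rw [hMDx, Matrix.mul_neg]
  have hfinal : DX * DP.transpose - DP * DX.transpose = 0 := by
    rw [hDXeq, Matrix.transpose_neg, Matrix.transpose_mul, hBsymT]
    simp [Matrix.neg_mul, Matrix.mul_neg, Matrix.mul_assoc]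
  intro i j
  have := congrFun (congrFun hfinal i) j
  simp only [Matrix.sub_apply, Matrix.mul_apply, Matrix.transpose_apply, Matrix.zero_apply,
    hDP, hDX, Matrix.of_apply] at this
  rw [Finset.sum_sub_distrib]
  exact this

private lemma aux_shuffle (N : ℕ) (Dp Dx : Fin N → Fin N → ℝ) (c d : Fin N → ℝ)
    (key : ∀ i j, ∑ k, (Dx i k * Dp j k - Dp i k * Dx j k) = 0) :
    ∑ k, ((∑ i, c i * Dx i k) * (∑ j, d j * Dp j k)
      - (∑ i, c i * Dp i k) * (∑ j, d j * Dx j k)) = 0 := by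
  have h1 : ∀ k, (∑ i, c i * Dx i k) * (∑ j, d j * Dp j k)
      - (∑ i, c i * Dp i k) * (∑ j, d j * Dx j k)
      = ∑ i, ∑ j, (c i * d j) * (Dx i k * Dp j k - Dp i k * Dx j k) := by
    intro k
    rw [Finset.sum_mul_sum, Finset.sum_mul_sum, ← Finset.sum_sub_distrib]
    refine Finset.sum_congr rfl fun i _ => ?_
    rw [← Finset.sum_sub_distrib]
    refine Finset.sum_congr rfl fun j _ => ?_
    ring
  calc ∑ k, ((∑ i, c i * Dx i k) * (∑ j, d j * Dp j k)
      - (∑ i, c i * Dp i k) * (∑ j, d j * Dx j k))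
      = ∑ k, ∑ i, ∑ j, (c i * d j) * (Dx i k * Dp j k - Dp i k * Dx j k) :=
        Finset.sum_congr rfl fun k _ => h1 k
    _ = ∑ i, ∑ k, ∑ j, (c i * d j) * (Dx i k * Dp j k - Dp i k * Dx j k) := Finset.sum_comm
    _ = ∑ i, ∑ j, ∑ k, (c i * d j) * (Dx i k * Dp j k - Dp i k * Dx j k) :=
        Finset.sum_congr rfl fun i _ => Finset.sum_comm
    _ = ∑ i, ∑ j, (c i * d j) * ∑ k, (Dx i k * Dp j k - Dp i k * Dx j k) := by
        simp only [Finset.mul_sum]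
    _ = 0 := by simp [key]

/-- The asymptotic momenta Poisson-commute: the components of the `C¹` map
`Θ : (x,p) ↦ θ` have vanishing canonical Poisson brackets, and so do the
conserved quantities `Q_a = ∑ᵢ Θᵢᵃ`. -/
theorem stmt10 (N : ℕ) (ε : ℝ) (hε : 0 < ε)
    (ψ ψx ψθ ψxθ : ℝ → ℝ → ℝ)
    (hC2 : ContDiff ℝ 2 (fun q : ℝ × ℝ => ψ q.1 q.2))
    (hψx : ∀ x t, HasDerivAt (fun x' => ψ x' t) (ψx x t) x)
    (hψθ : ∀ x t, HasDerivAt (fun t' => ψ x t') (ψθ x t) t)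
    (hψxθ : ∀ x t, HasDerivAt (fun t' => ψx x t') (ψxθ x t) t)
    (hpos : ∀ x t, 0 ≤ ψxθ x t)
    (hsym : ∀ x t, ψ (-x) (-t) = ψ x t)
    (hrange : ∀ x t, ε ≤ |x| → ψx x t = 0)
    (Θ : (Fin N → ℝ) × (Fin N → ℝ) → Fin N → ℝ)
    (hΘC1 : ContDiff ℝ 1 Θ)
    (hΘ : ∀ (q : (Fin N → ℝ) × (Fin N → ℝ)) (i : Fin N),
      q.2 i = Θ q i + ∑ j ∈ Finset.univ.erase i,
        ψx (q.1 i - q.1 j) (Θ q i - Θ q j)) :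
    (∀ (i j : Fin N) (q : (Fin N → ℝ) × (Fin N → ℝ)),
      ∑ k : Fin N,
        (fderiv ℝ (fun q' => Θ q' i) q ((Pi.single k 1 : Fin N → ℝ), (0 : Fin N → ℝ))
            * fderiv ℝ (fun q' => Θ q' j) q ((0 : Fin N → ℝ), (Pi.single k 1 : Fin N → ℝ))
          - fderiv ℝ (fun q' => Θ q' i) q ((0 : Fin N → ℝ), (Pi.single k 1 : Fin N → ℝ))
            * fderiv ℝ (fun q' => Θ q' j) q ((Pi.single k 1 : Fin N → ℝ), (0 : Fin N → ℝ)))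
        = 0) ∧
    (∀ (a b : ℕ) (q : (Fin N → ℝ) × (Fin N → ℝ)),
      ∑ k : Fin N,
        (fderiv ℝ (fun q' => ∑ i, Θ q' i ^ a) q ((Pi.single k 1 : Fin N → ℝ), (0 : Fin N → ℝ))
            * fderiv ℝ (fun q' => ∑ i, Θ q' i ^ b) q ((0 : Fin N → ℝ), (Pi.single k 1 : Fin N → ℝ))
          - fderiv ℝ (fun q' => ∑ i, Θ q' i ^ a) q ((0 : Fin N → ℝ), (Pi.single k 1 : Fin N → ℝ))
            * fderiv ℝ (fun q' => ∑ i, Θ q' i ^ b) q ((Pi.single k 1 : Fin N → ℝ), (0 : Fin N → ℝ)))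
        = 0) := by
  classical
  -- second derivatives of ψ
  set ψ2 : ℝ × ℝ → ℝ := fun p => ψ p.1 p.2 with hψ2def
  have hψ2d : Differentiable ℝ ψ2 := hC2.differentiable two_ne_zero
  set ψx2 : ℝ × ℝ → ℝ := fun p => ψx p.1 p.2 with hψx2def
  have hdir1 : ∀ p : ℝ × ℝ, fderiv ℝ ψ2 p (1, 0) = ψx2 p := by
    intro p
    have h1 : HasDerivAt (fun x => ψ2 (x, p.2)) (fderiv ℝ ψ2 p (1, 0)) p.1 := by
      have hc : HasDerivAt (fun x : ℝ => ((x, p.2) : ℝ × ℝ)) (1, 0) p.1 :=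
        (hasDerivAt_id p.1).prodMk (hasDerivAt_const p.1 p.2)
      exact (hψ2d p).hasFDerivAt.comp_hasDerivAt p.1 hc
    exact h1.unique (hψx p.1 p.2)
  have hψx2C1 : ContDiff ℝ 1 ψx2 := by
    have : ψx2 = fun p => fderiv ℝ ψ2 p (1, 0) := funext fun p => (hdir1 p).symm
    rw [this]
    exact (hC2.fderiv_right (le_refl 2)).clm_apply contDiff_const
  have hψx2d : Differentiable ℝ ψx2 := hψx2C1.differentiable one_ne_zero
  set ψxx : ℝ → ℝ → ℝ := fun x t => fderiv ℝ ψx2 (x, t) (1, 0) with hψxxdef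
  have hψxx : ∀ x t, HasDerivAt (fun x' => ψx x' t) (ψxx x t) x := by
    intro x t
    have hc : HasDerivAt (fun x' : ℝ => ((x', t) : ℝ × ℝ)) (1, 0) x :=
      (hasDerivAt_id x).prodMk (hasDerivAt_const x t)
    exact (hψx2d (x, t)).hasFDerivAt.comp_hasDerivAt x hc
  have hdirθ : ∀ x t, fderiv ℝ ψx2 (x, t) (0, 1) = ψxθ x t := by
    intro x t
    have hc : HasDerivAt (fun y : ℝ => ((x, y) : ℝ × ℝ)) (0, 1) t :=
      (hasDerivAt_const t x).prodMk (hasDerivAt_id t)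
    exact ((hψx2d (x, t)).hasFDerivAt.comp_hasDerivAt t hc).unique (hψxθ x t)
  have happly : ∀ x t α β, fderiv ℝ ψx2 (x, t) (α, β) = α * ψxx x t + β * ψxθ x t := by
    intro x t α β
    have h : ((α, β) : ℝ × ℝ) = α • ((1:ℝ), (0:ℝ)) + β • ((0:ℝ), (1:ℝ)) := by
      simp [Prod.ext_iff]
    rw [h, map_add, map_smul, map_smul, smul_eq_mul, smul_eq_mul, hdirθ]
  have hψxodd : ∀ x t, ψx (-x) (-t) = -(ψx x t) := by
    intro x t
    have h3 : HasDerivAt (fun x' : ℝ => ψ (-x') (-t)) (ψx (-x) (-t) * (-1)) x :=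
      (hψx (-x) (-t)).comp x (hasDerivAt_neg x)
    have h4 : HasDerivAt (fun x' => ψ x' t) (-(ψx (-x) (-t))) x := by
      simpa [hsym] using h3
    have := h4.unique (hψx x t)
    linarith
  have hψxxeven : ∀ x t, ψxx (-x) (-t) = ψxx x t := by
    intro x t
    have h3 : HasDerivAt (fun x' : ℝ => ψx (-x') (-t)) (ψxx (-x) (-t) * (-1)) x :=
      (hψxx (-x) (-t)).comp x (hasDerivAt_neg x)
    have h4 : HasDerivAt (fun x' => -(ψx x' t)) (-(ψxx (-x) (-t))) x := by
      simpa [hψxodd] using h3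
    have h5 : HasDerivAt (fun x' => -(ψx x' t)) (-(ψxx x t)) x := (hψxx x t).neg
    have := h4.unique h5
    linarith
  -- differentiability of components of Θ
  have hΘdi : ∀ i, Differentiable ℝ (fun q' => Θ q' i) :=
    fun i => (differentiable_pi.mp (hΘC1.differentiable one_ne_zero)) i
  -- the main Poisson-commutation identity for components of Θ
  have key1 : ∀ (q : (Fin N → ℝ) × (Fin N → ℝ)) (i j : Fin N),
      ∑ k : Fin N,
        (fderiv ℝ (fun q' => Θ q' i) q ((Pi.single k 1 : Fin N → ℝ), (0 : Fin N → ℝ))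
            * fderiv ℝ (fun q' => Θ q' j) q ((0 : Fin N → ℝ), (Pi.single k 1 : Fin N → ℝ))
          - fderiv ℝ (fun q' => Θ q' i) q ((0 : Fin N → ℝ), (Pi.single k 1 : Fin N → ℝ))
            * fderiv ℝ (fun q' => Θ q' j) q ((Pi.single k 1 : Fin N → ℝ), (0 : Fin N → ℝ)))
        = 0 := by
    intro q
    have key : ∀ (i : Fin N) (v : (Fin N → ℝ) × (Fin N → ℝ)), v.2 i =
        fderiv ℝ (fun q' => Θ q' i) q v + ∑ j ∈ Finset.univ.erase i,
          (ψxx (q.1 i - q.1 j) (Θ q i - Θ q j) * (v.1 i - v.1 j)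
            + ψxθ (q.1 i - q.1 j) (Θ q i - Θ q j)
              * (fderiv ℝ (fun q' => Θ q' i) q v - fderiv ℝ (fun q' => Θ q' j) q v)) := by
      intro i v
      set L : Fin N → ((Fin N → ℝ) × (Fin N → ℝ)) →L[ℝ] ℝ :=
        fun i => fderiv ℝ (fun q' => Θ q' i) q with hLdef
      have hx : ∀ k : Fin N, HasFDerivAt (fun q' : (Fin N → ℝ) × (Fin N → ℝ) => q'.1 k)
          ((ContinuousLinearMap.proj k).comp
            (ContinuousLinearMap.fst ℝ (Fin N → ℝ) (Fin N → ℝ))) q :=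
        fun k => ((ContinuousLinearMap.proj k).comp
          (ContinuousLinearMap.fst ℝ (Fin N → ℝ) (Fin N → ℝ))).hasFDerivAt
      have hgj : ∀ j : Fin N, HasFDerivAt
          (fun q' : (Fin N → ℝ) × (Fin N → ℝ) => ((q'.1 i - q'.1 j, Θ q' i - Θ q' j) : ℝ × ℝ))
          ((((ContinuousLinearMap.proj i).comp
              (ContinuousLinearMap.fst ℝ (Fin N → ℝ) (Fin N → ℝ)))
            - ((ContinuousLinearMap.proj j).comp
              (ContinuousLinearMap.fst ℝ (Fin N → ℝ) (Fin N → ℝ)))).prod (L i - L j)) q :=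
        fun j => ((hx i).sub (hx j)).prodMk
          (((hΘdi i) q).hasFDerivAt.sub ((hΘdi j) q).hasFDerivAt)
      have hcomp : ∀ j : Fin N, HasFDerivAt
          (fun q' : (Fin N → ℝ) × (Fin N → ℝ) => ψx2 (q'.1 i - q'.1 j, Θ q' i - Θ q' j))
          ((fderiv ℝ ψx2 (q.1 i - q.1 j, Θ q i - Θ q j)).comp
            ((((ContinuousLinearMap.proj i).comp
                (ContinuousLinearMap.fst ℝ (Fin N → ℝ) (Fin N → ℝ)))
              - ((ContinuousLinearMap.proj j).comp
                (ContinuousLinearMap.fst ℝ (Fin N → ℝ) (Fin N → ℝ)))).prod (L i - L j))) q :=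
        fun j => (hψx2d _).hasFDerivAt.comp q (hgj j)
      have hRHS : HasFDerivAt
          (fun q' : (Fin N → ℝ) × (Fin N → ℝ) => Θ q' i + ∑ j ∈ Finset.univ.erase i,
            ψx2 (q'.1 i - q'.1 j, Θ q' i - Θ q' j))
          (L i + ∑ j ∈ Finset.univ.erase i,
            ((fderiv ℝ ψx2 (q.1 i - q.1 j, Θ q i - Θ q j)).comp
              ((((ContinuousLinearMap.proj i).comp
                  (ContinuousLinearMap.fst ℝ (Fin N → ℝ) (Fin N → ℝ)))
                - ((ContinuousLinearMap.proj j).comp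
                  (ContinuousLinearMap.fst ℝ (Fin N → ℝ) (Fin N → ℝ)))).prod (L i - L j)))) q :=
        ((hΘdi i) q).hasFDerivAt.add (HasFDerivAt.fun_sum fun j _ => hcomp j)
      have hLHS : HasFDerivAt (fun q' : (Fin N → ℝ) × (Fin N → ℝ) => q'.2 i)
          ((ContinuousLinearMap.proj i).comp
            (ContinuousLinearMap.snd ℝ (Fin N → ℝ) (Fin N → ℝ))) q :=
        ((ContinuousLinearMap.proj i).comp
          (ContinuousLinearMap.snd ℝ (Fin N → ℝ) (Fin N → ℝ))).hasFDerivAt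
      have hfun : (fun q' : (Fin N → ℝ) × (Fin N → ℝ) => q'.2 i)
          = (fun q' => Θ q' i + ∑ j ∈ Finset.univ.erase i,
              ψx2 (q'.1 i - q'.1 j, Θ q' i - Θ q' j)) := by
        funext q'
        simpa [hψx2def] using hΘ q' i
      rw [hfun] at hLHS
      have hEq := hLHS.unique hRHS
      have := DFunLike.congr_fun hEq v
      simp only [ContinuousLinearMap.add_apply, ContinuousLinearMap.coe_sum',
        Finset.sum_apply, ContinuousLinearMap.comp_apply, ContinuousLinearMap.prod_apply,
        ContinuousLinearMap.sub_apply, ContinuousLinearMap.coe_fst',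
        ContinuousLinearMap.proj_apply] at this
      simpa [happly, mul_comm] using this
    intro i j
    refine aux_matrix N
      (fun i k => fderiv ℝ (fun q' => Θ q' i) q ((0 : Fin N → ℝ), (Pi.single k 1 : Fin N → ℝ)))
      (fun i k => fderiv ℝ (fun q' => Θ q' i) q ((Pi.single k 1 : Fin N → ℝ), (0 : Fin N → ℝ)))
      (fun i j => ψxx (q.1 i - q.1 j) (Θ q i - Θ q j))
      (fun i j => ψxθ (q.1 i - q.1 j) (Θ q i - Θ q j))
      ?_ ?_ ?_ i j
    · intro i j
      have : ψxx (q.1 j - q.1 i) (Θ q j - Θ q i)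
          = ψxx (-(q.1 i - q.1 j)) (-(Θ q i - Θ q j)) := by rw [neg_sub, neg_sub]
      rw [this, hψxxeven]
    · intro i k
      have h := key i ((0 : Fin N → ℝ), Pi.single k 1)
      simpa [Pi.single_apply] using h
    · intro i k
      have h := key i ((Pi.single k 1 : Fin N → ℝ), (0 : Fin N → ℝ))
      simpa [Pi.single_apply] using h
  refine ⟨fun i j q => key1 q i j, ?_⟩
  intro a b q
  have hQd : ∀ (a : ℕ), HasFDerivAt (fun q' => ∑ i, Θ q' i ^ a)
      (∑ i, ((a:ℝ) * Θ q i ^ (a-1)) • fderiv ℝ (fun q' => Θ q' i) q) q :=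
    fun a => HasFDerivAt.fun_sum fun i _ =>
      (hasDerivAt_pow a (Θ q i)).comp_hasFDerivAt q ((hΘdi i) q).hasFDerivAt
  have hfa := (hQd a).fderiv
  have hfb := (hQd b).fderiv
  rw [hfa, hfb]
  simp only [ContinuousLinearMap.coe_sum', Finset.sum_apply, ContinuousLinearMap.coe_smul',
    Pi.smul_apply, smul_eq_mul]
  exact aux_shuffle N
    (fun i k => fderiv ℝ (fun q' => Θ q' i) q ((0 : Fin N → ℝ), (Pi.single k 1 : Fin N → ℝ)))
    (fun i k => fderiv ℝ (fun q' => Θ q' i) q ((Pi.single k 1 : Fin N → ℝ), (0 : Fin N → ℝ)))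
    (fun i => (a:ℝ) * Θ q i ^ (a-1)) (fun i => (b:ℝ) * Θ q i ^ (b-1)) (key1 q)
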